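/- arXiv:2507.00728 — 5 statements merged into one kernel-verified Lean document; each statement's English description precedes it below -/
import Mathlib

section
/- Let S_n be a star graph with centre x and leaves v₁,…,v_n, let λ assign to each edge x v_j a finite set of positive integer time labels, and let τ be the largest label. Define F : V(S_n) × V(S_n) × {1,…,τ+1} × {1,…,τ+1} → ℕ ∪ {∞} by F(u,w,t₁,t₂) = 1 if uw is an edge of S_n, t₁ ∈ λ(uw) and t₂ = t₁+1; F(v,v,t₁,t₂) = 0 whenever t₁ < t₂; and F(u,w,t₁,t₂) = ∞ otherwise. Then there exists a valid walk on (S_n,F) from x to x that visits all n+1 vertices and has cost at most 2n if and only if there exists an ordering v_{σ(1)},…,v_{σ(n)} of the leaves and times t₁ < t₂ < ⋯ < t_{2n} such that for each 1 ≤ j ≤ n both t_{2j-1} and t_{2j} belong to λ(x v_{σ(j)}). -/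
/-- The source vertex of a quadruple `(u, v, t₁, t₂)`. -/
def qsrc {V : Type*} (q : V × V × ℕ × ℕ) : V := q.1

/-- The destination vertex of a quadruple `(u, v, t₁, t₂)`. -/
def qdst {V : Type*} (q : V × V × ℕ × ℕ) : V := q.2.1

/-- The departure time of a quadruple `(u, v, t₁, t₂)`. -/
def qdep {V : Type*} (q : V × V × ℕ × ℕ) : ℕ := q.2.2.1

/-- The arrival time of a quadruple `(u, v, t₁, t₂)`. -/
def qarr {V : Type*} (q : V × V × ℕ × ℕ) : ℕ := q.2.2.2

/-- A valid walk on a temporal cost graph with cost function `F`: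
consecutive quadruples match up, every quadruple has `t < t'` and finite cost,
and arrival times precede subsequent departure times. -/
def IsValidWalk {V : Type*} (F : V → V → ℕ → ℕ → ℕ∞) (W : List (V × V × ℕ × ℕ)) : Prop :=
  (∀ i, ∀ hi : i + 1 < W.length, qdst (W[i]'(Nat.lt_of_succ_lt hi)) = qsrc (W[i + 1]'hi)) ∧
  (∀ q ∈ W, qdep q < qarr q ∧ F (qsrc q) (qdst q) (qdep q) (qarr q) < ⊤) ∧
  (∀ i, ∀ hi : i + 1 < W.length, qarr (W[i]'(Nat.lt_of_succ_lt hi)) ≤ qdep (W[i + 1]'hi))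

/-- The cost of a walk: the sum of the costs of its quadruples. -/
def walkCost {V : Type*} (F : V → V → ℕ → ℕ → ℕ∞) (W : List (V × V × ℕ × ℕ)) : ℕ∞ :=
  (W.map fun q => F (qsrc q) (qdst q) (qdep q) (qarr q)).sum

/-- The list of vertices visited by a walk, namely `u₁, v₁, v₂, …, v_ℓ`. -/
def visited {V : Type*} : List (V × V × ℕ × ℕ) → List V
  | [] => []
  | q :: rest => qsrc q :: (q :: rest).map qdst

/-- The (nonempty) walk `W` is from `s` to `t`. -/
def WalkFrom {V : Type*} (W : List (V × V × ℕ × ℕ)) (s t : V) : Prop :=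
  ∃ q1 ql, W.head? = some q1 ∧ W.getLast? = some ql ∧ qsrc q1 = s ∧ qdst ql = t

/-- The cost function of the temporal cost graph obtained from a temporal star
`(Sₙ, λ)` with centre `none` and leaves `some j`: traversing an edge costs `1`
exactly when the departure time is a label of that edge and the arrival time is
one later; staying put is free; everything else is impossible. -/
noncomputable def starF {n : ℕ} (lam : Fin n → Finset ℕ) :
    Option (Fin n) → Option (Fin n) → ℕ → ℕ → ℕ∞ := fun u w t₁ t₂ =>
  if u = w then (if t₁ < t₂ then 0 else ⊤)
  else
    match u, w with
    | none, some j => if t₁ ∈ lam j ∧ t₂ = t₁ + 1 then 1 else ⊤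
    | some j, none => if t₁ ∈ lam j ∧ t₂ = t₁ + 1 then 1 else ⊤
    | _, _ => ⊤

section Helpers

variable {n : ℕ} {lam : Fin n → Finset ℕ}

lemma starF_move {u w : Option (Fin n)} {t₁ t₂ : ℕ} (hne : u ≠ w)
    (h : starF lam u w t₁ t₂ < ⊤) :
    ∃ j, t₁ ∈ lam j ∧ t₂ = t₁ + 1 ∧
      ((u = none ∧ w = some j) ∨ (u = some j ∧ w = none)) ∧
      starF lam u w t₁ t₂ = 1 := by
  unfold starF at h ⊢
  rw [if_neg hne] at h ⊢
  match u, w with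
  | none, none => exact absurd rfl hne
  | none, some j =>
    refine ⟨j, ?_⟩
    by_cases hc : t₁ ∈ lam j ∧ t₂ = t₁ + 1
    · exact ⟨hc.1, hc.2, Or.inl ⟨rfl, rfl⟩, if_pos hc⟩
    · simp only [hc, if_false] at h
      exact absurd h (lt_irrefl _)
  | some j, none =>
    refine ⟨j, ?_⟩
    by_cases hc : t₁ ∈ lam j ∧ t₂ = t₁ + 1
    · exact ⟨hc.1, hc.2, Or.inr ⟨rfl, rfl⟩, if_pos hc⟩
    · simp only [hc, if_false] at h
      exact absurd h (lt_irrefl _)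
  | some j, some k => simp at h

lemma starF_self {v : Option (Fin n)} {t₁ t₂ : ℕ} (h : t₁ < t₂) :
    starF lam v v t₁ t₂ = 0 := by
  unfold starF; rw [if_pos rfl, if_pos h]

end Helpers

section WalkLemmas

variable {V : Type*} [DecidableEq V]

/-- The list of "real moves" of a walk. -/
def wmoves (W : List (V × V × ℕ × ℕ)) : List (V × V × ℕ × ℕ) :=
  W.filter (fun q => qsrc q ≠ qdst q)

lemma wmoves_sublist (W : List (V × V × ℕ × ℕ)) : List.Sublist (wmoves W) W :=
  List.filter_sublist

lemma mem_wmoves {W : List (V × V × ℕ × ℕ)} {q : V × V × ℕ × ℕ} :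
    q ∈ wmoves W ↔ q ∈ W ∧ qsrc q ≠ qdst q := by
  simp [wmoves, List.mem_filter]

/-- Cost of a walk where moves cost 1 and self-loops cost 0. -/
lemma walkCost_eq_card {F : V → V → ℕ → ℕ → ℕ∞} :
    ∀ (W : List (V × V × ℕ × ℕ)),
    (∀ q ∈ W, F (qsrc q) (qdst q) (qdep q) (qarr q)
        = if qsrc q = qdst q then 0 else 1) →
    walkCost F W = ((wmoves W).length : ℕ∞)
  | [], _ => by simp [walkCost, wmoves]
  | q :: rest, h => by
    have hq := h q (List.mem_cons_self)
    have ih := walkCost_eq_card rest (fun q hq => h q (List.mem_cons_of_mem _ hq))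
    by_cases hsd : qsrc q = qdst q
    · have : wmoves (q :: rest) = wmoves rest := by
        simp [wmoves, List.filter_cons, hsd]
      rw [this, ← ih]
      simp only [walkCost, List.map_cons, List.sum_cons]
      rw [hq, if_pos hsd, zero_add]
    · have : wmoves (q :: rest) = q :: wmoves rest := by
        simp [wmoves, List.filter_cons, hsd]
      rw [this]
      simp only [walkCost, List.map_cons, List.sum_cons, hq, if_neg hsd,
        List.length_cons] at ih ⊢
      rw [ih]
      push_cast
      ring

/-- Filtering a chain along two vertex maps, when removed elements are loops. -/
lemma chain_filter (f g : (V × V × ℕ × ℕ) → V) (p : (V × V × ℕ × ℕ) → Bool)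
    (hp : ∀ q, p q = false → g q = f q) :
    ∀ (W : List (V × V × ℕ × ℕ)), W.IsChain (fun a b => g a = f b) →
      (W.filter p).IsChain (fun a b => g a = f b) ∧
      (∀ a, (W.filter p).head? = some a → ∀ b, W.head? = some b → f a = f b)
  | [], _ => by simp
  | q :: rest, h => by
    rw [List.isChain_cons] at h
    obtain ⟨hhd, hr⟩ := h
    obtain ⟨c1, c2⟩ := chain_filter f g p hp rest hr
    by_cases hq : p q = true
    · rw [List.filter_cons_of_pos hq]
      constructor
      · rw [List.isChain_cons]
        refine ⟨fun a ha => ?_, c1⟩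
        cases rest with
        | nil => simp [List.filter] at ha
        | cons r rs =>
          have := c2 a ha r rfl
          rw [this]
          exact hhd r rfl
      · intro a ha b hb
        simp only [List.head?_cons, Option.some_inj] at ha hb
        rw [← ha, ← hb]
    · rw [List.filter_cons_of_neg (by simpa using hq)]
      refine ⟨c1, fun a ha b hb => ?_⟩
      simp only [List.head?_cons, Option.some_inj] at hb
      cases rest with
      | nil => simp at ha
      | cons r rs =>
        have h1 := c2 a ha r rfl
        have h2 := hhd r rfl
        have h3 := hp q (by simpa using hq)
        rw [h1, ← h2, h3, ← hb]

end WalkLemmas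

section WalkLemmas2

variable {V : Type*}

lemma head?_zero {α : Type*} {l : List α} (h : 0 < l.length) :
    l.head? = some (l[0]'h) := by
  cases l with
  | nil => simp at h
  | cons a l => rfl

lemma getLast?_last {α : Type*} {l : List α} (h : 0 < l.length) :
    l.getLast? = some (l[l.length - 1]'(by omega)) := by
  rw [List.getLast?_eq_getElem?, List.getElem?_eq_getElem (by omega)]

lemma isValidWalk_chain_vertex {F : V → V → ℕ → ℕ → ℕ∞}
    {W : List (V × V × ℕ × ℕ)} (h : IsValidWalk F W) :
    W.IsChain (fun a b => qdst a = qsrc b) := by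
  rw [List.isChain_iff_getElem]
  intro i hi
  simpa using h.1 i (by omega)

lemma isValidWalk_dep_pairwise {F : V → V → ℕ → ℕ → ℕ∞}
    {W : List (V × V × ℕ × ℕ)} (h : IsValidWalk F W) :
    W.Pairwise (fun a b => qdep a < qdep b) := by
  haveI : Trans (fun a b : V × V × ℕ × ℕ => qdep a < qdep b)
      (fun a b : V × V × ℕ × ℕ => qdep a < qdep b) (fun a b => qdep a < qdep b) :=
    ⟨lt_trans⟩
  rw [← List.isChain_iff_pairwise, List.isChain_iff_getElem]
  intro i hi
  have h1 := (h.2.1 (W.get ⟨i, by omega⟩) (W.get_mem _)).1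
  have h2 := h.2.2 i (by omega)
  simp only [List.get_eq_getElem] at *
  omega

lemma exists_move_to {W : List (V × V × ℕ × ℕ)} {v : V}
    (hchain : ∀ i, ∀ hi : i + 1 < W.length,
      qdst (W[i]'(Nat.lt_of_succ_lt hi)) = qsrc (W[i + 1]'hi))
    (h0 : ∀ h : 0 < W.length, qsrc (W[0]'h) ≠ v)
    (hv : ∃ i, ∃ h : i < W.length, qdst (W[i]'h) = v) :
    ∃ q ∈ W, qdst q = v ∧ qsrc q ≠ qdst q := by
  obtain ⟨i, hv⟩ := hv
  induction i using Nat.strong_induction_on with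
  | _ i ih =>
    obtain ⟨hi, hdi⟩ := hv
    by_cases hsd : qsrc (W[i]'hi) = qdst (W[i]'hi)
    · cases i with
      | zero => exact absurd (hsd.trans hdi) (h0 hi)
      | succ i' =>
        exact ih i' (by omega) ⟨by omega, (hchain i' hi).trans (hsd.trans hdi)⟩
    · exact ⟨W[i]'hi, W.getElem_mem hi, hdi, hsd⟩
end WalkLemmas2

section Alt

lemma walkCost_eq_length {V : Type*} {F : V → V → ℕ → ℕ → ℕ∞} :
    ∀ (W : List (V × V × ℕ × ℕ)),
    (∀ q ∈ W, F (qsrc q) (qdst q) (qdep q) (qarr q) = 1) →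
    walkCost F W = (W.length : ℕ∞)
  | [], _ => by simp [walkCost]
  | q :: rest, h => by
    have ih := walkCost_eq_length rest (fun q hq => h q (List.mem_cons_of_mem _ hq))
    simp only [walkCost, List.map_cons, List.sum_cons, List.length_cons] at ih ⊢
    rw [h q (List.mem_cons_self), ih]
    push_cast
    ring

lemma alternating {n : ℕ} {M : List (Option (Fin n) × Option (Fin n) × ℕ × ℕ)}
    (hchain : M.IsChain (fun a b => qdst a = qsrc b))
    (hstruct : ∀ q ∈ M, ∃ j, (qsrc q = none ∧ qdst q = some j) ∨
      (qsrc q = some j ∧ qdst q = none))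
    (hhead : ∀ a, M.head? = some a → qsrc a = none) :
    ∀ i, ∀ h : i < M.length, (qsrc (M[i]'h) = none ↔ i % 2 = 0) := by
  intro i
  induction i with
  | zero =>
    intro h
    exact iff_of_true (hhead _ (head?_zero h)) rfl
  | succ i ih =>
    intro h
    have hi : i < M.length := by omega
    have hc : qdst (M[i]'hi) = qsrc (M[i + 1]'h) := by
      have := List.isChain_iff_getElem.mp hchain i (by omega)
      simpa using this
    obtain ⟨j, hj⟩ := hstruct (M[i]'hi) (M.getElem_mem hi)
    rcases hj with ⟨hs, hd⟩ | ⟨hs, hd⟩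
    · have he : i % 2 = 0 := (ih hi).mp hs
      rw [← hc, hd]
      simp only [iff_false, reduceCtorEq, false_iff]
      omega
    · have he : ¬ (i % 2 = 0) := fun hev => by
        have := (ih hi).mpr hev
        rw [hs] at this
        simp at this
      rw [← hc, hd]
      simp only [true_iff]
      omega

end Alt

section Visited

variable {V : Type*}

lemma mem_visited_dst {W : List (V × V × ℕ × ℕ)} {q : V × V × ℕ × ℕ}
    (h : q ∈ W) : qdst q ∈ visited W := by
  cases W with
  | nil => simp at h
  | cons a l =>
    exact List.mem_cons_of_mem _ (List.mem_map_of_mem h)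

lemma mem_visited_src0 {W : List (V × V × ℕ × ℕ)} (h : 0 < W.length) :
    qsrc (W[0]'h) ∈ visited W := by
  cases W with
  | nil => simp at h
  | cons a l => exact List.mem_cons_self

lemma mem_visited_cases {W : List (V × V × ℕ × ℕ)} {v : V} (h : v ∈ visited W) :
    (∃ h0 : 0 < W.length, qsrc (W[0]'h0) = v) ∨ ∃ q ∈ W, qdst q = v := by
  cases W with
  | nil => simp [visited] at h
  | cons a l =>
    rcases List.mem_cons.mp h with h | h
    · exact Or.inl ⟨by simp, h.symm⟩
    · obtain ⟨q, hq, hdq⟩ := List.mem_map.mp h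
      exact Or.inr ⟨q, hq, hdq⟩

end Visited

lemma getElem_idx_congr {α : Type*} {l : List α} {i j : ℕ} (h : i = j)
    (hi : i < l.length) : l[i]'hi = l[j]'(h ▸ hi) := by subst h; rfl

/-- There is a valid walk on the temporal cost graph of the star `(Sₙ, λ)` from the
centre `x` back to `x` visiting all `n + 1` vertices with cost at most `2n` iff there
is an ordering of the leaves and strictly increasing times `t₁ < ⋯ < t_{2n}` such that
the `(2j-1)`-st and `(2j)`-th times are labels of the edge to the `j`-th leaf. -/
theorem star_exploration_iff {n τ : ℕ} (lam : Fin n → Finset ℕ)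
    (hlab : ∀ j : Fin n, ∀ t ∈ lam j, 1 ≤ t ∧ t ≤ τ)
    (hmax : ∀ j : Fin n, ∀ t ∈ lam j, t ≤ τ) :
    (∃ W : List (Option (Fin n) × Option (Fin n) × ℕ × ℕ),
        IsValidWalk (starF lam) W ∧ WalkFrom W none none ∧
        (∀ v : Option (Fin n), v ∈ visited W) ∧
        walkCost (starF lam) W ≤ ((2 * n : ℕ) : ℕ∞)) ↔
    (∃ (σ : Equiv.Perm (Fin n)) (t : Fin (2 * n) → ℕ), StrictMono t ∧
        ∀ j : Fin n, t ⟨2 * (j : ℕ), by have := j.isLt; omega⟩ ∈ lam (σ j) ∧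
          t ⟨2 * (j : ℕ) + 1, by have := j.isLt; omega⟩ ∈ lam (σ j)) := by
  constructor
  · -- forward direction
    rintro ⟨W, hvalid, hfrom, hvisit, hcost⟩
    rcases Nat.eq_zero_or_pos n with hn | hn
    · subst hn
      exact ⟨Equiv.refl _, fun _ => 0,
        fun a _ _ => absurd a.isLt (by omega),
        fun j => absurd j.isLt (by omega)⟩
    · obtain ⟨q1, ql, hq1, hql, hsrc1, hdstl⟩ := hfrom
      have hW0 : 0 < W.length := by
        cases W with
        | nil => simp at hq1
        | cons a l => simp
      have hq1' : q1 = W[0]'hW0 := by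
        rw [head?_zero hW0] at hq1
        exact (Option.some_inj.mp hq1).symm
      have hql' : ql = W[W.length - 1]'(by omega) := by
        rw [getLast?_last hW0] at hql
        exact (Option.some_inj.mp hql).symm
      set M := wmoves W with hMdef
      have hstructM : ∀ q ∈ M, ∃ j, qdep q ∈ lam j ∧ qarr q = qdep q + 1 ∧
          ((qsrc q = none ∧ qdst q = some j) ∨ (qsrc q = some j ∧ qdst q = none)) := by
        intro q hq
        obtain ⟨hqW, hne⟩ := mem_wmoves.mp hq
        obtain ⟨j, h1, h2, h3, _⟩ := starF_move hne (hvalid.2.1 q hqW).2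
        exact ⟨j, h1, h2, h3⟩
      have hcostW : walkCost (starF lam) W = (M.length : ℕ∞) := by
        apply walkCost_eq_card
        intro q hq
        obtain ⟨hlt, hfin⟩ := hvalid.2.1 q hq
        by_cases hsd : qsrc q = qdst q
        · rw [if_pos hsd, hsd, starF_self hlt]
        · rw [if_neg hsd]
          obtain ⟨j, _, _, _, h4⟩ := starF_move hsd hfin
          exact h4
      have hMle : M.length ≤ 2 * n := by
        rw [hcostW] at hcost
        exact_mod_cast hcost
      have hchainW := isValidWalk_chain_vertex hvalid
      obtain ⟨hMchain, hMhead⟩ := chain_filter qsrc qdst (fun q => qsrc q ≠ qdst q)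
        (fun q hq => by simp at hq; rw [hq]) W hchainW
      have hMfil : List.filter (fun q => decide (qsrc q ≠ qdst q)) W = M := rfl
      rw [hMfil] at hMchain hMhead
      have hsrcM0 : ∀ a, M.head? = some a → qsrc a = none := by
        intro a ha
        rw [hMhead a ha q1 hq1, hsrc1]
      have hrev : W.reverse.IsChain (fun a b => qsrc a = qdst b) := by
        rw [List.isChain_reverse]
        exact hchainW.imp (fun _ _ h => h.symm)
      obtain ⟨_, hMrevhead⟩ := chain_filter qdst qsrc (fun q => qsrc q ≠ qdst q)
        (fun q hq => by simpa using hq) W.reverse hrev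
      have hdstMl : ∀ a, M.getLast? = some a → qdst a = none := by
        intro a ha
        have h1 : (W.reverse.filter (fun q => qsrc q ≠ qdst q)).head? = some a := by
          rw [List.filter_reverse, List.head?_reverse]
          exact ha
        have h2 : W.reverse.head? = some ql := by
          rw [List.head?_reverse]; exact hql
        rw [hMrevhead a h1 ql h2, hdstl]
      have hleaf : ∀ j : Fin n, ∃ q ∈ M, qdst q = some j := by
        intro j
        rcases mem_visited_cases (hvisit (some j)) with ⟨h0, hsrc⟩ | ⟨q, hqW, hdq⟩
        · rw [← hq1', hsrc1] at hsrc
          simp at hsrc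
        · obtain ⟨i, hi, hie⟩ := List.getElem_of_mem hqW
          obtain ⟨q', hq'W, hd, hne⟩ := exists_move_to (v := some j) hvalid.1
            (fun h => by rw [← hq1', hsrc1]; simp) ⟨i, hi, by rw [hie]; exact hdq⟩
          exact ⟨q', mem_wmoves.mpr ⟨hq'W, hne⟩, hd⟩
      have hM0 : 0 < M.length := by
        obtain ⟨q, hq, _⟩ := hleaf ⟨0, hn⟩
        cases hMeq : M with
        | nil => rw [hMeq] at hq; simp at hq
        | cons a l => simp
      have halt := alternating hMchain (fun q hq => by
          obtain ⟨j, _, _, h3⟩ := hstructM q hq; exact ⟨j, h3⟩) hsrcM0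
      have hmlast : qdst (M[M.length - 1]'(by omega)) = none :=
        hdstMl _ (getLast?_last hM0)
      have hme : M.length % 2 = 0 := by
        by_contra hodd
        have hev : (M.length - 1) % 2 = 0 := by omega
        have hsrc := (halt (M.length - 1) (by omega)).mpr hev
        obtain ⟨j, _, _, h3⟩ :=
          hstructM _ (M.getElem_mem (show M.length - 1 < M.length by omega))
        rcases h3 with ⟨_, hd⟩ | ⟨hs, _⟩
        · rw [hmlast] at hd; simp at hd
        · rw [hsrc] at hs; simp at hs
      have hpair : ∀ k : ℕ, ∀ hk : 2 * k < M.length,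
          ∃ j, qdst (M[2 * k]'hk) = some j ∧ qdep (M[2 * k]'hk) ∈ lam j := by
        intro k hk
        obtain ⟨j, h1, _, h3⟩ := hstructM _ (M.getElem_mem hk)
        rcases h3 with ⟨_, hd⟩ | ⟨hs, _⟩
        · exact ⟨j, hd, h1⟩
        · have := (halt (2 * k) hk).mpr (by omega)
          rw [this] at hs; simp at hs
      have hidx : ∀ j : Fin n, ∃ i, ∃ hi : i < M.length,
          qdst (M[i]'hi) = some j ∧ i % 2 = 0 := by
        intro j
        obtain ⟨q, hq, hdq⟩ := hleaf j
        obtain ⟨i, hi, hie⟩ := List.getElem_of_mem hq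
        rw [← hie] at hdq
        refine ⟨i, hi, hdq, ?_⟩
        by_contra hodd
        obtain ⟨j', _, _, h3⟩ := hstructM _ (M.getElem_mem hi)
        rcases h3 with ⟨hs, _⟩ | ⟨_, hd⟩
        · exact hodd ((halt i hi).mp hs)
        · rw [hdq] at hd; simp at hd
      classical
      have hlen2 : n ≤ M.length / 2 := by
        have hinj : Function.Injective (fun j : Fin n =>
            (⟨(hidx j).choose / 2, by
              obtain ⟨hi, _, he⟩ := (hidx j).choose_spec; omega⟩ :
              Fin (M.length / 2))) := by
          intro a b hab
          simp only [Fin.mk.injEq] at hab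
          obtain ⟨hia, hda, hea⟩ := (hidx a).choose_spec
          obtain ⟨hib, hdb, heb⟩ := (hidx b).choose_spec
          have heq : (hidx a).choose = (hidx b).choose := by omega
          have e : M[(hidx a).choose]'hia = M[(hidx b).choose]'hib :=
            getElem_idx_congr heq hia
          have : some a = some b := by rw [← hda, ← hdb, e]
          exact Option.some_inj.mp this
        calc n = Fintype.card (Fin n) := (Fintype.card_fin n).symm
          _ ≤ Fintype.card (Fin (M.length / 2)) := Fintype.card_le_of_injective _ hinj
          _ = M.length / 2 := Fintype.card_fin _
      have hmlen : M.length = 2 * n := by omega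
      have hMpw : M.Pairwise (fun a b => qdep a < qdep b) :=
        List.Pairwise.sublist (wmoves_sublist W) (isValidWalk_dep_pairwise hvalid)
      have hilt : ∀ i : Fin (2 * n), (i : ℕ) < M.length := fun i => by
        have := i.isLt; omega
      have hpair2 : ∀ k : Fin n, ∃ j,
          qdst (M[2 * (k : ℕ)]'(by have := k.isLt; omega)) = some j ∧
          qdep (M[2 * (k : ℕ)]'(by have := k.isLt; omega)) ∈ lam j :=
        fun k => hpair (k : ℕ) (by have := k.isLt; omega)
      set ψ : Fin n → Fin n := fun k => (hpair2 k).choose with hψ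
      have hψspec : ∀ k : Fin n,
          qdst (M[2 * (k : ℕ)]'(by have := k.isLt; omega)) = some (ψ k) ∧
          qdep (M[2 * (k : ℕ)]'(by have := k.isLt; omega)) ∈ lam (ψ k) :=
        fun k => (hpair2 k).choose_spec
      have hψsurj : Function.Surjective ψ := by
        intro j
        obtain ⟨i, hi, hdq, hev⟩ := hidx j
        refine ⟨⟨i / 2, by omega⟩, ?_⟩
        have h2 : 2 * ((⟨i / 2, by omega⟩ : Fin n) : ℕ) = i := by
          show 2 * (i / 2) = i; omega
        have hsp := (hψspec ⟨i / 2, by omega⟩).1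
        rw [getElem_idx_congr h2 (by have : i < M.length := hi; omega)] at hsp
        rw [hsp] at hdq
        exact Option.some_inj.mp hdq
      refine ⟨Equiv.ofBijective ψ hψsurj.bijective_of_finite,
        fun i => qdep (M[(i : ℕ)]'(hilt i)), ?_, ?_⟩
      · intro a b hab
        have := List.pairwise_iff_get.mp hMpw ⟨(a : ℕ), hilt a⟩ ⟨(b : ℕ), hilt b⟩ hab
        simpa using this
      · intro j
        constructor
        · exact (hψspec j).2
        · have hi1 : 2 * (j : ℕ) + 1 < M.length := by have := j.isLt; omega
          obtain ⟨j', hdep', _, h3⟩ := hstructM _ (M.getElem_mem hi1)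
          rcases h3 with ⟨hs, _⟩ | ⟨hs, _⟩
          · have := (halt _ hi1).mp hs; omega
          · have hc : qdst (M[2 * (j : ℕ)]'(by omega)) =
                qsrc (M[2 * (j : ℕ) + 1]'hi1) := by
              have := List.isChain_iff_getElem.mp hMchain (2 * (j : ℕ)) (by omega)
              simpa using this
            have hjj : some (ψ j) = some j' := by
              rw [← (hψspec j).1, hc, hs]
            have hjj' : ψ j = j' := Option.some_inj.mp hjj
            show qdep (M[2 * (j : ℕ) + 1]'hi1) ∈ lam (ψ j)
            rw [hjj']
            exact hdep'

  · -- backward direction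
    rintro ⟨σ, t, hmono, hmem⟩
    rcases Nat.eq_zero_or_pos n with hn | hn
    · subst hn
      refine ⟨[(none, none, 0, 1)], ⟨?_, ?_, ?_⟩, ⟨_, _, rfl, rfl, rfl, rfl⟩, ?_, ?_⟩
      · intro i hi; simp at hi
      · intro q hq
        simp only [List.mem_singleton] at hq
        subst hq
        refine ⟨Nat.zero_lt_one, ?_⟩
        show starF lam none none 0 1 < ⊤
        rw [starF_self Nat.zero_lt_one]
        simp
      · intro i hi; simp at hi
      · intro v
        match v with
        | none => exact List.mem_cons_self
        | some j => exact j.elim0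
      · show walkCost (starF lam) _ ≤ _
        rw [walkCost]
        simp only [List.map_cons, List.map_nil, List.sum_cons, List.sum_nil]
        show starF lam none none 0 1 + 0 ≤ _
        rw [starF_self Nat.zero_lt_one]
        simp
    · -- n ≥ 1
      have hdiv : ∀ i : Fin (2 * n), (i : ℕ) / 2 < n := fun i => by
        have := i.isLt; omega
      set quad : Fin (2 * n) → (Option (Fin n) × Option (Fin n) × ℕ × ℕ) :=
        fun i => if (i : ℕ) % 2 = 0
          then (none, some (σ ⟨(i : ℕ) / 2, hdiv i⟩), t i, t i + 1)
          else (some (σ ⟨(i : ℕ) / 2, hdiv i⟩), none, t i, t i + 1) with hquad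
      have hdep : ∀ i, qdep (quad i) = t i := fun i => by
        by_cases h : (i : ℕ) % 2 = 0 <;> simp [hquad, h, qdep]
      have harr : ∀ i, qarr (quad i) = t i + 1 := fun i => by
        by_cases h : (i : ℕ) % 2 = 0 <;> simp [hquad, h, qarr]
      have hsrc_even : ∀ i : Fin (2 * n), (i : ℕ) % 2 = 0 → qsrc (quad i) = none ∧
          qdst (quad i) = some (σ ⟨(i : ℕ) / 2, hdiv i⟩) := fun i h => by
        simp [hquad, h, qsrc, qdst]
      have hsrc_odd : ∀ i : Fin (2 * n), (i : ℕ) % 2 = 1 →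
          qsrc (quad i) = some (σ ⟨(i : ℕ) / 2, hdiv i⟩) ∧
          qdst (quad i) = none := fun i h => by
        simp [hquad, h, qsrc, qdst]
      have hmem' : ∀ i : Fin (2 * n), t i ∈ lam (σ ⟨(i : ℕ) / 2, hdiv i⟩) := by
        intro i
        by_cases h : (i : ℕ) % 2 = 0
        · have he : i = (⟨2 * ((i : ℕ) / 2), by have := i.isLt; omega⟩ : Fin (2 * n)) :=
            Fin.ext (show (i : ℕ) = 2 * ((i : ℕ) / 2) by omega)
          conv_rhs => rw [he]
          exact (hmem ⟨(i : ℕ) / 2, hdiv i⟩).1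
        · have he : i = (⟨2 * ((i : ℕ) / 2) + 1, by have := i.isLt; omega⟩ : Fin (2 * n)) :=
            Fin.ext (show (i : ℕ) = 2 * ((i : ℕ) / 2) + 1 by omega)
          conv_rhs => rw [he]
          exact (hmem ⟨(i : ℕ) / 2, hdiv i⟩).2
      have hcost1 : ∀ i : Fin (2 * n),
          starF lam (qsrc (quad i)) (qdst (quad i)) (qdep (quad i)) (qarr (quad i)) = 1 := by
        intro i
        by_cases h : (i : ℕ) % 2 = 0
        · rw [(hsrc_even i h).1, (hsrc_even i h).2, hdep, harr]
          unfold starF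
          rw [if_neg (by simp)]
          exact if_pos ⟨hmem' i, rfl⟩
        · rw [(hsrc_odd i (by omega)).1, (hsrc_odd i (by omega)).2, hdep, harr]
          unfold starF
          rw [if_neg (by simp)]
          exact if_pos ⟨hmem' i, rfl⟩
      set W := List.ofFn quad with hWdef
      have hWlen : W.length = 2 * n := by simp [hWdef]
      have hWget : ∀ i, ∀ h : i < W.length, W[i]'h = quad ⟨i, by omega⟩ := by
        intro i h
        simp [hWdef]
      have hWmem : ∀ q ∈ W, ∃ i, quad i = q := fun q hq => by
        rcases List.mem_ofFn.mp hq with ⟨i, hi⟩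
        exact ⟨i, hi⟩
      refine ⟨W, ⟨?_, ?_, ?_⟩, ?_, ?_, ?_⟩
      · -- vertex chain
        intro i hi
        rw [hWget i _, hWget (i + 1) hi]
        have h1 : i < 2 * n := by omega
        by_cases h : i % 2 = 0
        · rw [(hsrc_even ⟨i, by omega⟩ h).2,
            (hsrc_odd ⟨i + 1, by omega⟩ (show (i + 1) % 2 = 1 by omega)).1]
          exact congrArg (fun k => some (σ k))
            (Fin.ext (show i / 2 = (i + 1) / 2 by omega))
        · rw [(hsrc_odd ⟨i, by omega⟩ (show i % 2 = 1 by omega)).2,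
            (hsrc_even ⟨i + 1, by omega⟩ (show (i + 1) % 2 = 0 by omega)).1]
      · -- each quadruple valid
        intro q hq
        obtain ⟨i, rfl⟩ := hWmem q hq
        refine ⟨?_, ?_⟩
        · rw [hdep, harr]; omega
        · rw [hcost1 i]; exact Ne.lt_top (by simp)
      · -- times
        intro i hi
        rw [hWget i _, hWget (i + 1) hi, hdep, harr]
        exact hmono (show (⟨i, by omega⟩ : Fin (2 * n)) < ⟨i + 1, by omega⟩ from
          Fin.mk_lt_mk.mpr (by omega))
      · -- WalkFrom
        have h0 : 0 < W.length := by omega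
        refine ⟨W[0]'h0, W[W.length - 1]'(by omega), head?_zero h0, getLast?_last h0, ?_, ?_⟩
        · rw [hWget 0 h0]
          exact (hsrc_even ⟨0, by omega⟩ (by simp)).1
        · rw [hWget (W.length - 1) (by omega)]
          exact (hsrc_odd ⟨W.length - 1, by omega⟩ (show (W.length - 1) % 2 = 1 by omega)).2
      · -- visited
        intro v
        match v with
        | none =>
          have h1 : (1 : ℕ) < W.length := by omega
          have := mem_visited_dst (W.getElem_mem h1)
          rwa [hWget 1 h1, (hsrc_odd ⟨1, by omega⟩ (show 1 % 2 = 1 by omega)).2] at this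
        | some j =>
          have hk : 2 * ((σ.symm j : ℕ)) < W.length := by
            have := (σ.symm j).isLt; omega
          set i₀ : Fin (2 * n) := ⟨2 * (σ.symm j : ℕ), by omega⟩ with hi₀
          have hmem2 := mem_visited_dst (W.getElem_mem hk)
          have hwg : W[2 * ((σ.symm j : ℕ))]'hk = quad i₀ := hWget _ hk
          rw [hwg, (hsrc_even i₀ (show (i₀ : ℕ) % 2 = 0 by
            show 2 * ((σ.symm j : ℕ)) % 2 = 0; omega)).2] at hmem2
          have he : (⟨(i₀ : ℕ) / 2, hdiv i₀⟩ : Fin n) = σ.symm j :=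
            Fin.ext (show (i₀ : ℕ) / 2 = (σ.symm j : ℕ) by
              show 2 * ((σ.symm j : ℕ)) / 2 = _; omega)
          rw [he, Equiv.apply_symm_apply] at hmem2
          exact hmem2
      · -- cost
        rw [walkCost_eq_length W (fun q hq => by
          obtain ⟨i, rfl⟩ := hWmem q hq; exact hcost1 i), hWlen]
end

section
/- Let (G,F) be a temporal cost graph whose underlying graph G is a tree, suppose every edge of G has maximum traversal number at most 3 in (G,F), and let W be a valid walk on (G,F) from a vertex s back to the same vertex s. Then every edge of G is traversed by W at most twice. -/
/-- A traversal sequence for the edge `uv`: a sequence of pairs of times, each allowing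
a finite-cost traversal of the edge in some direction, with each arrival time at most
the next departure time. -/
def TraversalSeq {V : Type*} (F : V → V → ℕ → ℕ → ℕ∞) (u v : V) (s : List (ℕ × ℕ)) : Prop :=
  (∀ p ∈ s, min (F u v p.1 p.2) (F v u p.1 p.2) < ⊤) ∧
  (∀ i, ∀ hi : i + 1 < s.length, (s[i]'(Nat.lt_of_succ_lt hi)).2 ≤ (s[i + 1]'hi).1)

/-- Parity of boundary colours of a chained walk. -/
lemma parityAux {V : Type*} (c : V → Bool) :
    ∀ (W : List (V × V × ℕ × ℕ)) (hne : W ≠ [])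
      (_ : ∀ i (hi : i + 1 < W.length), qdst (W[i]'(Nat.lt_of_succ_lt hi)) = qsrc (W[i+1]'hi)),
      (c (qsrc (W.head hne)) = c (qdst (W.getLast hne)) ↔
        Even (W.countP (fun q => c (qsrc q) != c (qdst q)))) := by
  intro W
  induction W with
  | nil => simp
  | cons q rest ih =>
    intro hne hchain
    cases rest with
    | nil =>
      simp only [List.head_cons, List.getLast_singleton, List.countP_cons, List.countP_nil]
      by_cases h : c (qsrc q) = c (qdst q) <;> simp [h]
    | cons q' rest' =>
      have hd : qdst q = qsrc q' := hchain 0 (by simp)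
      have ih' := ih (by simp) (fun i hi => by
        have := hchain (i+1) (by simpa using hi)
        simpa using this)
      have hgl : (q :: q' :: rest').getLast hne = (q' :: rest').getLast (by simp) :=
        List.getLast_cons (by simp)
      rw [List.head_cons, hgl, List.countP_cons]
      set z := c (qdst ((q' :: rest').getLast (by simp))) with hz
      rw [List.head_cons, ← hd] at ih'
      by_cases h : c (qsrc q) = c (qdst q)
      · have hb : (c (qsrc q) != c (qdst q)) = false := by simpa using h
        rw [hb]
        simpa [h] using ih'
      · have hb : (c (qsrc q) != c (qdst q)) = true := by simpa using h
        rw [hb]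
        rw [show ((if true = true then 1 else 0 : ℕ)) = 1 from rfl, Nat.even_add_one, ← ih']
        cases cx : c (qsrc q) <;> cases cy : c (qdst q) <;> cases cz : z <;> simp_all

/-- Arrival times precede all later departure times along a valid walk. -/
lemma walk_time_mono {V : Type*} (F : V → V → ℕ → ℕ → ℕ∞) (W : List (V × V × ℕ × ℕ))
    (hW : IsValidWalk F W) :
    ∀ j (hj : j < W.length) i (hij : i < j),
      qarr (W[i]'(lt_trans hij hj)) ≤ qdep (W[j]'hj) := by
  intro j
  induction j with
  | zero => omega
  | succ j ihj =>
    intro hj i hij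
    rcases Nat.lt_succ_iff_lt_or_eq.mp hij with h | h
    · have h1 := ihj (by omega) i h
      have h2 : qdep (W[j]'(by omega)) < qarr (W[j]'(by omega)) :=
        (hW.2.1 _ (List.getElem_mem _)).1
      have h3 := hW.2.2 j hj
      omega
    · subst h
      exact hW.2.2 i hj

/-- In a temporal cost graph on a tree in which every edge has maximum traversal number
at most `3`, every valid walk from a vertex `s` back to `s` traverses each edge at most
twice. -/
theorem tree_closed_walk_edge_uses_le_two {V : Type*} [DecidableEq V]
    (G : SimpleGraph V) (hG : G.IsTree) (F : V → V → ℕ → ℕ → ℕ∞)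
    (hF1 : ∀ u v t₁ t₂, t₂ ≤ t₁ → F u v t₁ t₂ = ⊤)
    (hF2 : ∀ v t₁ t₂, t₁ < t₂ → F v v t₁ t₂ = 0)
    (hF3 : ∀ u v t₁ t₂, u ≠ v → 0 < F u v t₁ t₂)
    (hGF : ∀ u v t₁ t₂, F u v t₁ t₂ < ⊤ → u ≠ v → G.Adj u v)
    (hmt : ∀ a b : V, G.Adj a b → ∀ s, TraversalSeq F a b s → s.length ≤ 3)
    (s : V) (W : List (V × V × ℕ × ℕ)) (hW : IsValidWalk F W) (hfrom : WalkFrom W s s) :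
    ∀ a b : V, G.Adj a b →
      (W.filter fun q =>
          decide ((qsrc q = a ∧ qdst q = b) ∨ (qsrc q = b ∧ qdst q = a))).length ≤ 2 := by
  classical
  intro a b hab
  set P : (V × V × ℕ × ℕ) → Bool := fun q =>
    decide ((qsrc q = a ∧ qdst q = b) ∨ (qsrc q = b ∧ qdst q = a)) with hP
  have hne : a ≠ b := hab.ne
  -- the filtered list is small: it yields a traversal sequence
  have hlen3 : (W.filter P).length ≤ 3 := by
    have hpw : W.Pairwise (fun q q' => qarr q ≤ qdep q') := by
      rw [List.pairwise_iff_getElem]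
      intro i j hi hj hij
      exact walk_time_mono F W hW j hj i hij
    have hpw' : (W.filter P).Pairwise (fun q q' => qarr q ≤ qdep q') :=
      hpw.sublist List.filter_sublist
    have hpw'' : ((W.filter P).map fun q => (qdep q, qarr q)).Pairwise
        (fun p p' : ℕ × ℕ => p.2 ≤ p'.1) := by
      rw [List.pairwise_map]
      exact hpw'
    have hts : TraversalSeq F a b ((W.filter P).map fun q => (qdep q, qarr q)) := by
      constructor
      · intro p hp
        rw [List.mem_map] at hp
        obtain ⟨q, hq, rfl⟩ := hp
        have hqW : q ∈ W := List.mem_of_mem_filter hq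
        have hqP : P q = true := List.of_mem_filter hq
        have hfin := (hW.2.1 q hqW).2
        rw [hP] at hqP
        simp only [decide_eq_true_eq] at hqP
        rcases hqP with ⟨h1, h2⟩ | ⟨h1, h2⟩
        · rw [h1, h2] at hfin
          exact lt_of_le_of_lt (min_le_left _ _) hfin
        · rw [h1, h2] at hfin
          exact lt_of_le_of_lt (min_le_right _ _) hfin
      · intro i hi
        rw [List.pairwise_iff_getElem] at hpw''
        exact hpw'' i (i+1) (Nat.lt_of_succ_lt hi) hi (Nat.lt_succ_self i)
    have := hmt a b hab _ hts
    simpa using this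
  -- the filtered list has even length, via a 2-colouring
  have heven : Even (W.filter P).length := by
    set D : SimpleGraph V := G \ SimpleGraph.fromEdgeSet {s(a, b)} with hD
    set c : V → Bool := fun v => decide (D.Reachable v a) with hc
    have hca : c a = true := by
      have : D.Reachable a a := SimpleGraph.Reachable.refl a
      simp [hc, this]
    have hnr : ¬ D.Reachable a b := by
      have hbridge : G.IsBridge s(a, b) :=
        (SimpleGraph.isAcyclic_iff_forall_edge_isBridge.mp hG.2)
          (G.mem_edgeSet.mpr hab)
      rw [SimpleGraph.isBridge_iff] at hbridge
      exact hbridge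
    have hcb : c b = false := by
      simp only [hc, decide_eq_false_iff_not]
      intro h
      exact hnr (h.symm)
    -- each quadruple flips the colour iff it traverses ab
    have hflip : ∀ q ∈ W, P q = (c (qsrc q) != c (qdst q)) := by
      intro q hq
      by_cases hsd : qsrc q = qdst q
      · have hP0 : P q = false := by
          rw [hP]
          simp only [decide_eq_false_iff_not]
          rintro (⟨h1, h2⟩ | ⟨h1, h2⟩) <;> exact hne (by rw [← h1, ← h2, hsd])
        rw [hP0, hsd]
        simp
      · have hadj : G.Adj (qsrc q) (qdst q) :=
          hGF _ _ _ _ (hW.2.1 q hq).2 hsd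
        by_cases hedg : (qsrc q = a ∧ qdst q = b) ∨ (qsrc q = b ∧ qdst q = a)
        · have hP1 : P q = true := by rw [hP]; simpa using hedg
          rw [hP1]
          rcases hedg with ⟨h1, h2⟩ | ⟨h1, h2⟩ <;> rw [h1, h2] <;> simp [hca, hcb]
        · have hP0 : P q = false := by rw [hP]; simpa using hedg
          have hDadj : D.Adj (qsrc q) (qdst q) := by
            rw [hD]
            refine ⟨hadj, ?_⟩
            rw [SimpleGraph.fromEdgeSet_adj]
            rintro ⟨hmem, -⟩
            simp only [Set.mem_singleton_iff, Sym2.eq, Sym2.rel_iff', Prod.mk.injEq,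
              Prod.swap_prod_mk] at hmem
            rcases hmem with ⟨h1, h2⟩ | ⟨h1, h2⟩
            · exact hedg (Or.inl ⟨h1, h2⟩)
            · exact hedg (Or.inr ⟨h1, h2⟩)
          have hreach : D.Reachable (qsrc q) a ↔ D.Reachable (qdst q) a :=
            ⟨fun h => hDadj.symm.reachable.trans h, fun h => hDadj.reachable.trans h⟩
          rw [hP0]
          simp only [hc]
          by_cases h : D.Reachable (qsrc q) a
          · simp [h, hreach.mp h]
          · have h2 : ¬ D.Reachable (qdst q) a := fun h' => h (hreach.mpr h')
            simp [h, h2]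
    obtain ⟨q1, ql, hh, hl, hs1, hsl⟩ := hfrom
    have hWne : W ≠ [] := by
      intro h; rw [h] at hh; simp at hh
    have hh' : W.head hWne = q1 := by
      rw [List.head?_eq_head hWne] at hh; exact Option.some_injective _ hh
    have hl' : W.getLast hWne = ql := by
      rw [List.getLast?_eq_getLast hWne] at hl; exact Option.some_injective _ hl
    have hpar := parityAux c W hWne hW.1
    rw [hh', hl', hs1, hsl] at hpar
    have hcount : W.countP (fun q => c (qsrc q) != c (qdst q)) = W.countP P := by
      apply List.countP_congr
      intro q hq
      rw [hflip q hq]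
    rw [hcount] at hpar
    have := hpar.mp rfl
    rwa [List.countP_eq_length_filter] at this
  obtain ⟨k, hk⟩ := heven
  omega
end

section
/- Let (G,F) be a temporal cost graph whose underlying graph G is a tree, let v_s and v_t be vertices of G, let P be the unique path in G from v_s to v_t, and let E' be a set of edges of G such that every edge in E(G) ∖ E' has maximum traversal number at most 3 in (G,F). Then for every valid walk W on (G,F) from v_s to v_t: every edge not in E' and not on P is traversed by W at most twice, and every edge on P that is not in E' is traversed by W exactly once or exactly three times. -/
lemma aux_pairwise {V : Type*} (W : List (V × V × ℕ × ℕ))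
    (h2 : ∀ q ∈ W, qdep q < qarr q)
    (h3 : ∀ i, ∀ hi : i + 1 < W.length, qarr (W[i]'(Nat.lt_of_succ_lt hi)) ≤ qdep (W[i + 1]'hi)) :
    W.Pairwise (fun q q' => qarr q ≤ qdep q') := by
  rw [List.pairwise_iff_getElem]
  intro i j hi hj hij
  induction j with
  | zero => omega
  | succ k ih =>
    have hk : k < W.length := Nat.lt_of_succ_lt hj
    have h := h3 k hj
    rcases Nat.lt_or_ge i k with h' | h'
    · exact le_trans (ih hk h') (le_trans (le_of_lt (h2 _ (W.getElem_mem hk))) h)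
    · have : i = k := by omega
      subst this; exact h

lemma aux_parity {V : Type*} (R : V → Prop) (pred : (V × V × ℕ × ℕ) → Bool) :
    ∀ (W : List (V × V × ℕ × ℕ)),
    (∀ i, ∀ hi : i + 1 < W.length, qdst (W[i]'(Nat.lt_of_succ_lt hi)) = qsrc (W[i + 1]'hi)) →
    (∀ q ∈ W, if pred q then ¬(R (qsrc q) ↔ R (qdst q)) else (R (qsrc q) ↔ R (qdst q))) →
    ∀ q1 ql, W.head? = some q1 → W.getLast? = some ql →
      ((R (qsrc q1) ↔ R (qdst ql)) ↔ Even (W.filter pred).length)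
  | [] => by intro _ _ q1 ql h1 _; simp at h1
  | [q] => by
      intro _ hstep q1 ql h1 hl
      simp only [List.head?_cons, Option.some_inj] at h1
      simp only [List.getLast?_singleton, Option.some_inj] at hl
      subst h1; subst hl
      have := hstep q (by simp)
      by_cases h : pred q <;> simp [h, List.filter] at this ⊢ <;> tauto
  | q :: q' :: rest => by
      intro hchain hstep q1 ql h1 hl
      simp only [List.head?_cons, Option.some_inj] at h1
      subst h1
      rw [List.getLast?_cons_cons] at hl
      have hchain' : ∀ i, ∀ hi : i + 1 < (q' :: rest).length,
          qdst ((q' :: rest)[i]'(Nat.lt_of_succ_lt hi)) = qsrc ((q' :: rest)[i + 1]'hi) := by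
        intro i hi
        have := hchain (i + 1) (by simpa using Nat.succ_lt_succ hi)
        simpa using this
      have hstep' : ∀ x ∈ (q' :: rest), if pred x then ¬(R (qsrc x) ↔ R (qdst x))
          else (R (qsrc x) ↔ R (qdst x)) := fun x hx => hstep x (List.mem_cons_of_mem _ hx)
      have IH := aux_parity R pred (q' :: rest) hchain' hstep' q' ql rfl hl
      have h0 := hchain 0 (by simp)
      simp only [List.getElem_cons_zero, List.getElem_cons_succ] at h0
      have hs := hstep q (by simp)
      rw [h0] at hs
      by_cases h : pred q
      · rw [List.filter_cons_of_pos (by simp [h])]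
        simp only [h, if_true] at hs
        simp only [List.length_cons, Nat.even_add_one]
        tauto
      · rw [List.filter_cons_of_neg (by simp [h])]
        rw [if_neg (by simp [h])] at hs
        tauto

lemma aux_walk_parity {V : Type*} [DecidableEq V] {G : SimpleGraph V} (a b : V)
    (R : V → Prop) (hR : ∀ x y : V, G.Adj x y → s(x, y) ≠ s(a, b) → (R x ↔ R y))
    (hab : ¬(R a ↔ R b)) :
    ∀ {u v : V} (w : G.Walk u v), ((R u ↔ R v) ↔ Even (w.edges.count s(a, b)))
  | u, _, SimpleGraph.Walk.nil => by simp
  | u, v, @SimpleGraph.Walk.cons _ _ _ m _ h p => by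
      have IH := aux_walk_parity a b R hR hab p
      rw [SimpleGraph.Walk.edges_cons, List.count_cons]
      by_cases he : s(u, m) = s(a, b)
      · have hd := Sym2.eq_iff.mp he
        have hstep : ¬(R u ↔ R m) := by
          rcases hd with ⟨rfl, rfl⟩ | ⟨rfl, rfl⟩ <;> tauto
        simp only [beq_iff_eq, if_pos he, Nat.even_add_one]
        tauto
      · have hstep := hR _ _ h he
        simp only [beq_iff_eq, if_neg he, Nat.add_zero]
        tauto

/-- In a temporal cost graph on a tree, with `P` the unique path from `vs` to `vt` and
`E'` a set of edges such that every edge outside `E'` has maximum traversal number at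
most `3`, every valid walk from `vs` to `vt` traverses each edge outside `E'` not on `P`
at most twice, and each edge outside `E'` on `P` exactly once or exactly three times. -/
theorem tree_walk_edge_uses_off_subforest {V : Type*} [DecidableEq V]
    (G : SimpleGraph V) (hG : G.IsTree) (F : V → V → ℕ → ℕ → ℕ∞)
    (hF1 : ∀ u v t₁ t₂, t₂ ≤ t₁ → F u v t₁ t₂ = ⊤)
    (hF2 : ∀ v t₁ t₂, t₁ < t₂ → F v v t₁ t₂ = 0)
    (hF3 : ∀ u v t₁ t₂, u ≠ v → 0 < F u v t₁ t₂)
    (hGF : ∀ u v t₁ t₂, F u v t₁ t₂ < ⊤ → u ≠ v → G.Adj u v)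
    (vs vt : V) (p : G.Walk vs vt) (hp : p.IsPath) (E' : Set (Sym2 V))
    (hmt : ∀ a b : V, G.Adj a b → s(a, b) ∉ E' →
      ∀ s, TraversalSeq F a b s → s.length ≤ 3)
    (W : List (V × V × ℕ × ℕ)) (hW : IsValidWalk F W) (hfrom : WalkFrom W vs vt) :
    ∀ a b : V, G.Adj a b → s(a, b) ∉ E' →
      (s(a, b) ∉ p.edges →
        (W.filter fun q =>
            decide ((qsrc q = a ∧ qdst q = b) ∨ (qsrc q = b ∧ qdst q = a))).length ≤ 2) ∧
      (s(a, b) ∈ p.edges →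
        (W.filter fun q =>
            decide ((qsrc q = a ∧ qdst q = b) ∨ (qsrc q = b ∧ qdst q = a))).length = 1 ∨
        (W.filter fun q =>
            decide ((qsrc q = a ∧ qdst q = b) ∨ (qsrc q = b ∧ qdst q = a))).length = 3) := by
  intro a b hab hEe
  obtain ⟨hchain, hq, harr⟩ := hW
  obtain ⟨q1, ql, hh, hl, hs1, hl1⟩ := hfrom
  set H := G \ SimpleGraph.fromEdgeSet {s(a, b)} with hH
  set R : V → Prop := fun x => H.Reachable a x with hRdef
  have hbridge : ¬ H.Reachable a b :=
    (SimpleGraph.isBridge_iff.mp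
      (SimpleGraph.isAcyclic_iff_forall_adj_isBridge.mp hG.IsAcyclic hab))
  have hRab : ¬ (R a ↔ R b) := fun h => hbridge (h.mp (SimpleGraph.Reachable.refl a))
  have hR : ∀ x y : V, G.Adj x y → s(x, y) ≠ s(a, b) → (R x ↔ R y) := by
    intro x y hxy hne
    have hadj : H.Adj x y := by
      rw [hH, SimpleGraph.sdiff_adj, SimpleGraph.fromEdgeSet_adj]
      exact ⟨hxy, fun hc => hne (by simpa using hc.1)⟩
    exact ⟨fun h => h.trans hadj.reachable, fun h => h.trans hadj.symm.reachable⟩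
  set pred : (V × V × ℕ × ℕ) → Bool :=
    fun q => decide ((qsrc q = a ∧ qdst q = b) ∨ (qsrc q = b ∧ qdst q = a)) with hpreddef
  have hlen : (W.filter pred).length ≤ 3 := by
    have hts : TraversalSeq F a b ((W.filter pred).map fun q => (qdep q, qarr q)) := by
      constructor
      · intro pr hpr
        obtain ⟨q, hqW, rfl⟩ := List.mem_map.mp hpr
        have hfin := (hq q (List.mem_of_mem_filter hqW)).2
        have hp' : ((qsrc q = a ∧ qdst q = b) ∨ (qsrc q = b ∧ qdst q = a)) := by
          have := List.of_mem_filter hqW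
          simpa [hpreddef] using this
        rcases hp' with ⟨h1, h2⟩ | ⟨h1, h2⟩
        · rw [h1, h2] at hfin
          exact lt_of_le_of_lt (min_le_left _ _) hfin
        · rw [h1, h2] at hfin
          exact lt_of_le_of_lt (min_le_right _ _) hfin
      · intro i hi
        have hpw : W.Pairwise (fun q q' => qarr q ≤ qdep q') :=
          aux_pairwise W (fun q hq' => (hq q hq').1) harr
        have hpwF : (W.filter pred).Pairwise (fun q q' => qarr q ≤ qdep q') :=
          hpw.sublist List.filter_sublist
        rw [List.length_map] at hi
        have := (List.pairwise_iff_getElem.mp hpwF) i (i + 1)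
          (Nat.lt_of_succ_lt hi) hi (Nat.lt_succ_self i)
        simpa using this
    have := hmt a b hab hEe _ hts
    simpa using this
  have hstepW : ∀ q ∈ W, if pred q then ¬(R (qsrc q) ↔ R (qdst q))
      else (R (qsrc q) ↔ R (qdst q)) := by
    intro q hqW
    have hfin := (hq q hqW).2
    by_cases h : ((qsrc q = a ∧ qdst q = b) ∨ (qsrc q = b ∧ qdst q = a))
    · rw [if_pos (by simp only [hpreddef, decide_eq_true_eq]; exact h)]
      rcases h with ⟨h1, h2⟩ | ⟨h1, h2⟩ <;> rw [h1, h2] <;> tauto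
    · rw [if_neg (by simp only [hpreddef, decide_eq_true_eq]; exact h)]
      by_cases hsame : qsrc q = qdst q
      · rw [hsame]
      · have hadjq : G.Adj (qsrc q) (qdst q) := hGF _ _ _ _ hfin hsame
        exact hR _ _ hadjq (fun hc => h (Sym2.eq_iff.mp hc))
  have hWpar := aux_parity R pred W hchain hstepW q1 ql hh hl
  rw [hs1, hl1] at hWpar
  have hPpar := aux_walk_parity a b R hR hRab p
  constructor
  · intro hnotin
    have hc0 : p.edges.count s(a, b) = 0 := List.count_eq_zero.mpr hnotin
    have hRst : R vs ↔ R vt := hPpar.mpr (by rw [hc0]; exact ⟨0, rfl⟩)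
    obtain ⟨k, hk⟩ := hWpar.mp hRst
    omega
  · intro hin
    have hc1 : p.edges.count s(a, b) = 1 :=
      List.count_eq_one_of_mem hp.isTrail.edges_nodup hin
    have hnR : ¬ (R vs ↔ R vt) := fun h => by
      have := hPpar.mp h
      rw [hc1] at this
      exact (Nat.not_even_iff_odd.mpr odd_one) this
    have hodd : ¬ Even (W.filter pred).length := fun h => hnR (hWpar.mpr h)
    rw [Nat.not_even_iff_odd] at hodd
    obtain ⟨k, hk⟩ := hodd
    omega
end

section
/- Let (G,F) be a temporal cost graph with vertex set V of size n, let v_s ≠ v_t be vertices of G, let k ≥ 2 with k ≤ n, let f ∈ ℕ, and let 𝓕 be a family of functions c : V ∖ {v_s,v_t} → {1,…,k−2} such that for every subset S ⊆ V ∖ {v_s,v_t} with |S| = k−2 there exists c ∈ 𝓕 that is injective on S. Then there is a valid walk on (G,F) from v_s to v_t of cost at most f visiting at least k distinct vertices if and only if there exist c ∈ 𝓕 and a valid walk on (G,F) from v_s to v_t of cost at most f that visits, for each colour j ∈ {1,…,k−2}, at least one vertex v with c(v) = j. -/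
/-- Colour coding correctness: with `𝓕` a family of `(k-2)`-colourings of
`V ∖ {vs, vt}` such that every `(k-2)`-subset is rainbow under some member of `𝓕`,
there is a valid walk from `vs` to `vt` of cost at most `f` visiting at least `k`
distinct vertices iff for some `c ∈ 𝓕` there is a valid walk from `vs` to `vt` of cost
at most `f` visiting at least one vertex of each colour `1, …, k-2`. -/
theorem colour_coding_correct {V : Type*} [Fintype V] [DecidableEq V]
    (F : V → V → ℕ → ℕ → ℕ∞) (n : ℕ) (hn : Fintype.card V = n)
    (hF1 : ∀ u v t₁ t₂, t₂ ≤ t₁ → F u v t₁ t₂ = ⊤)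
    (hF2 : ∀ v t₁ t₂, t₁ < t₂ → F v v t₁ t₂ = 0)
    (hF3 : ∀ u v t₁ t₂, u ≠ v → 0 < F u v t₁ t₂)
    (vs vt : V) (hst : vs ≠ vt) (k : ℕ) (hk2 : 2 ≤ k) (hkn : k ≤ n) (f : ℕ)
    (𝓕 : Set (V → ℕ))
    (hrange : ∀ c ∈ 𝓕, ∀ v : V, v ≠ vs → v ≠ vt → 1 ≤ c v ∧ c v ≤ k - 2)
    (hhash : ∀ S : Finset V, vs ∉ S → vt ∉ S → S.card = k - 2 →
      ∃ c ∈ 𝓕, Set.InjOn c ↑S) :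
    (∃ W, IsValidWalk F W ∧ WalkFrom W vs vt ∧ walkCost F W ≤ (f : ℕ∞) ∧
        k ≤ (visited W).toFinset.card) ↔
    (∃ c ∈ 𝓕, ∃ W, IsValidWalk F W ∧ WalkFrom W vs vt ∧ walkCost F W ≤ (f : ℕ∞) ∧
        ∀ j : ℕ, 1 ≤ j → j ≤ k - 2 →
          ∃ w ∈ visited W, w ≠ vs ∧ w ≠ vt ∧ c w = j) := by
  have hmem : ∀ (W : List (V × V × ℕ × ℕ)), WalkFrom W vs vt →
      vs ∈ visited W ∧ vt ∈ visited W := by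
    intro W hW
    obtain ⟨q1, ql, h1, hl, hs, ht⟩ := hW
    match W with
    | [] => simp at h1
    | q :: rest =>
      simp only [List.head?_cons, Option.some.injEq] at h1
      subst h1
      have hql : ql ∈ q :: rest := by
        obtain ⟨h', rfl⟩ := List.mem_getLast?_eq_getLast (Option.mem_def.2 hl)
        exact List.getLast_mem h'
      constructor
      · simp [visited, ← hs]
      · simp only [visited, List.mem_cons, List.mem_map]
        right
        exact ⟨ql, List.mem_cons.mp hql, ht⟩
  constructor
  · rintro ⟨W, hV, hFrom, hCost, hCard⟩
    have hvs := (hmem W hFrom).1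
    have hvt := (hmem W hFrom).2
    set A := (visited W).toFinset with hA
    have hAs : vs ∈ A := List.mem_toFinset.2 hvs
    have hAt : vt ∈ A := List.mem_toFinset.2 hvt
    have hsub : {vs, vt} ⊆ A := by
      intro x hx; simp at hx; rcases hx with rfl | rfl <;> assumption
    have hcard2 : ({vs, vt} : Finset V).card = 2 := by
      rw [Finset.card_insert_of_notMem (by simp [hst]), Finset.card_singleton]
    have hT : k - 2 ≤ (A \ {vs, vt}).card := by
      rw [Finset.card_sdiff_of_subset hsub, hcard2]; omega
    obtain ⟨S, hSsub, hScard⟩ := Finset.exists_subset_card_eq hT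
    have hSmem : ∀ w ∈ S, w ∈ A ∧ w ≠ vs ∧ w ≠ vt := by
      intro w hw
      have := hSsub hw
      simp only [Finset.mem_sdiff, Finset.mem_insert, Finset.mem_singleton] at this
      exact ⟨this.1, fun h => this.2 (Or.inl h), fun h => this.2 (Or.inr h)⟩
    have hSvs : vs ∉ S := fun h => ((hSmem vs h).2.1 rfl)
    have hSvt : vt ∉ S := fun h => ((hSmem vt h).2.2 rfl)
    obtain ⟨c, hcF, hcinj⟩ := hhash S hSvs hSvt hScard
    refine ⟨c, hcF, W, hV, hFrom, hCost, ?_⟩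
    intro j hj1 hj2
    have himg : S.image c = Finset.Icc 1 (k - 2) := by
      apply Finset.eq_of_subset_of_card_le
      · intro x hx
        obtain ⟨w, hwS, rfl⟩ := Finset.mem_image.1 hx
        obtain ⟨_, hw1, hw2⟩ := hSmem w hwS
        exact Finset.mem_Icc.2 (hrange c hcF w hw1 hw2)
      · rw [Finset.card_image_of_injOn hcinj, hScard, Nat.card_Icc]
        omega
    have hj : j ∈ S.image c := by rw [himg]; exact Finset.mem_Icc.2 ⟨hj1, hj2⟩
    obtain ⟨w, hwS, hwc⟩ := Finset.mem_image.1 hj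
    obtain ⟨hw0, hw1, hw2⟩ := hSmem w hwS
    exact ⟨w, List.mem_toFinset.1 hw0, hw1, hw2, hwc⟩
  · rintro ⟨c, hcF, W, hV, hFrom, hCost, hCols⟩
    refine ⟨W, hV, hFrom, hCost, ?_⟩
    have hvs := (hmem W hFrom).1
    have hvt := (hmem W hFrom).2
    set A := (visited W).toFinset with hA
    have hAs : vs ∈ A := List.mem_toFinset.2 hvs
    have hAt : vt ∈ A := List.mem_toFinset.2 hvt
    have hch : ∀ j : ℕ, ∃ w : V, 1 ≤ j → j ≤ k - 2 →
        w ∈ A \ {vs, vt} ∧ c w = j := by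
      intro j
      by_cases h1 : 1 ≤ j ∧ j ≤ k - 2
      · obtain ⟨w, hw1, hw2, hw3, hw4⟩ := hCols j h1.1 h1.2
        refine ⟨w, fun _ _ => ⟨?_, hw4⟩⟩
        simp only [Finset.mem_sdiff, Finset.mem_insert, Finset.mem_singleton]
        exact ⟨List.mem_toFinset.2 hw1, by tauto⟩
      · exact ⟨vs, fun a b => absurd ⟨a, b⟩ h1⟩
    choose w hw using hch
    have hinj : (Finset.Icc 1 (k - 2)).card ≤ (A \ {vs, vt}).card := by
      apply Finset.card_le_card_of_injOn w
      · intro j hj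
        exact (hw j (Finset.mem_Icc.1 hj).1 (Finset.mem_Icc.1 hj).2).1
      · intro i hi j hj hij
        have h1 := (hw i (Finset.mem_Icc.1 hi).1 (Finset.mem_Icc.1 hi).2).2
        have h2 := (hw j (Finset.mem_Icc.1 hj).1 (Finset.mem_Icc.1 hj).2).2
        rw [← h1, ← h2, hij]
    rw [Nat.card_Icc] at hinj
    have hsub : {vs, vt} ⊆ A := by
      intro x hx; simp at hx; rcases hx with rfl | rfl <;> assumption
    have hcard2 : ({vs, vt} : Finset V).card = 2 := by
      rw [Finset.card_insert_of_notMem (by simp [hst]), Finset.card_singleton]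
    have hsd := Finset.card_sdiff_of_subset hsub
    rw [hcard2] at hsd
    have h2A : 2 ≤ A.card := hcard2 ▸ Finset.card_le_card hsub
    omega
end

section
/- Let (G,λ) be a temporal graph, where G is a finite graph and λ assigns to each edge of G a set of time labels from {1,…,τ}. Define F : V(G) × V(G) × {1,…,τ+1} × {1,…,τ+1} → ℕ ∪ {∞} by F(u,v,t₁,t₂) = 1 if uv is an edge of G, t₁ ∈ λ(uv) and t₂ = t₁+1; F(v,v,t₁,t₂) = 0 whenever t₁ < t₂; and F(u,v,t₁,t₂) = ∞ otherwise. Then for all vertices u,v of G and every ℓ ∈ ℕ, there is a valid walk on (G,F) from u to v with exactly ℓ quadruples (and hence cost ℓ) if and only if there is a strict temporal walk from u to v in (G,λ) using exactly ℓ edges, i.e., a sequence of edges e₁,…,e_ℓ of G and times s₁ < s₂ < ⋯ < s_ℓ such that e₁,…,e_ℓ form a walk from u to v in G and s_i ∈ λ(e_i) for each i. -/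
open scoped Classical in
/-- The cost function of the temporal cost graph obtained from a temporal graph
`(G, λ)`: traversing an edge costs `1` exactly when the departure time is a label of
that edge and the arrival time is one later; staying put is free; everything else is
impossible. -/
noncomputable def tgF {V : Type*} (G : SimpleGraph V) (lam : Sym2 V → Finset ℕ) :
    V → V → ℕ → ℕ → ℕ∞ := fun u v t₁ t₂ =>
  if u = v then (if t₁ < t₂ then 0 else ⊤)
  else if G.Adj u v ∧ t₁ ∈ lam s(u, v) ∧ t₂ = t₁ + 1 then 1 else ⊤


section AuxLemmas

variable {V : Type*}

lemma tgF_eq_one_of {G : SimpleGraph V} {lam : Sym2 V → Finset ℕ} {a b : V} {t₁ t₂ : ℕ}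
    (h : G.Adj a b) (hm : t₁ ∈ lam s(a, b)) (ht : t₂ = t₁ + 1) :
    tgF G lam a b t₁ t₂ = 1 := by
  unfold tgF
  rw [if_neg h.ne, if_pos ⟨h, hm, ht⟩]

lemma of_tgF_eq_one {G : SimpleGraph V} {lam : Sym2 V → Finset ℕ} {a b : V} {t₁ t₂ : ℕ}
    (h : tgF G lam a b t₁ t₂ = 1) :
    G.Adj a b ∧ t₁ ∈ lam s(a, b) ∧ t₂ = t₁ + 1 := by
  unfold tgF at h
  split_ifs at h with h1 h2 h3
  · exact absurd h (by simp)
  · exact absurd h (by simp)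
  · exact h3
  · exact absurd h (by simp)

lemma tgF_zero_or_one {G : SimpleGraph V} {lam : Sym2 V → Finset ℕ} {a b : V} {t₁ t₂ : ℕ}
    (h : tgF G lam a b t₁ t₂ < ⊤) :
    tgF G lam a b t₁ t₂ = 0 ∨ tgF G lam a b t₁ t₂ = 1 := by
  unfold tgF at h ⊢
  split_ifs at h ⊢ with h1 h2 h3
  · exact Or.inl rfl
  · exact absurd h (lt_irrefl _)
  · exact Or.inr rfl
  · exact absurd h (lt_irrefl _)

lemma tg_sum_le_length (L : List ℕ∞) (h : ∀ x ∈ L, x ≤ 1) : L.sum ≤ (L.length : ℕ∞) := by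
  induction L with
  | nil => simp
  | cons a L ih =>
    simp only [List.sum_cons, List.length_cons, Nat.cast_succ]
    calc a + L.sum ≤ 1 + (L.length : ℕ∞) :=
          add_le_add (h a List.mem_cons_self) (ih fun x hx => h x (List.mem_cons_of_mem a hx))
      _ = (L.length : ℕ∞) + 1 := add_comm _ _

lemma tg_sum_eq_length (L : List ℕ∞) (h : ∀ x ∈ L, x = 1) : L.sum = (L.length : ℕ∞) := by
  induction L with
  | nil => simp
  | cons a L ih =>
    rw [List.sum_cons, h a List.mem_cons_self,
      ih (fun x hx => h x (List.mem_cons_of_mem a hx)), List.length_cons, Nat.cast_succ,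
      add_comm]

lemma tg_all_one_of_sum_eq_length (L : List ℕ∞) (h : ∀ x ∈ L, x = 0 ∨ x = 1)
    (hs : L.sum = (L.length : ℕ∞)) : ∀ x ∈ L, x = 1 := by
  induction L with
  | nil => simp
  | cons a L ih =>
    have h01 : ∀ x ∈ L, x = 0 ∨ x = 1 := fun x hx => h x (List.mem_cons_of_mem a hx)
    rcases h a List.mem_cons_self with ha | ha
    · exfalso
      rw [List.sum_cons, ha, zero_add, List.length_cons, Nat.cast_succ] at hs
      have hle := tg_sum_le_length L (fun x hx => by rcases h01 x hx with h' | h' <;> simp [h'])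
      rw [hs] at hle
      have hlt : (L.length : ℕ∞) < (L.length : ℕ∞) + 1 := by
        have : ((L.length : ℕ) : ℕ∞) < ((L.length + 1 : ℕ) : ℕ∞) := by
          exact_mod_cast Nat.lt_succ_self _
        simpa using this
      exact absurd (lt_of_lt_of_le hlt hle) (lt_irrefl _)
    · intro x hx
      rcases List.mem_cons.mp hx with rfl | hx
      · exact ha
      · apply ih h01 _ x hx
        rw [List.sum_cons, ha, List.length_cons, Nat.cast_succ, add_comm] at hs
        exact WithTop.add_right_cancel (by simp : (1 : ℕ∞) ≠ ⊤) hs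

lemma tg_walk_edges_getElem {G : SimpleGraph V} :
    ∀ {u v : V} (p : G.Walk u v) (i : ℕ) (hi : i < p.length),
      p.edges[i]'(by rwa [SimpleGraph.Walk.length_edges]) =
        s(p.getVert i, p.getVert (i + 1))
  | _, _, .cons h p, 0, hi => by
      simp [SimpleGraph.Walk.getVert_cons_succ, SimpleGraph.Walk.getVert_zero]
  | _, _, .cons h p, (i + 1), hi => by
      simp only [SimpleGraph.Walk.edges_cons, List.getElem_cons_succ,
        SimpleGraph.Walk.getVert_cons_succ]
      exact tg_walk_edges_getElem p i (by simpa using hi)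

lemma tg_exists_walk_of_quads {G : SimpleGraph V} (W : List (V × V × ℕ × ℕ)) :
    ∀ u v : V,
      (∀ q ∈ W, G.Adj (qsrc q) (qdst q)) →
      (∀ i, ∀ hi : i + 1 < W.length, qdst (W[i]'(Nat.lt_of_succ_lt hi)) = qsrc (W[i + 1]'hi)) →
      (W = [] → u = v) →
      (∀ q, W.head? = some q → qsrc q = u) →
      (∀ q, W.getLast? = some q → qdst q = v) →
      ∃ p : G.Walk u v, p.edges = W.map fun q => s(qsrc q, qdst q) := by
  induction W with
  | nil =>
    intro u v _ _ hemp _ _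
    obtain rfl := hemp rfl
    exact ⟨.nil, rfl⟩
  | cons q rest ih =>
    intro u v hadj hchain _ hhead hlast
    have hu : qsrc q = u := hhead q rfl
    subst hu
    cases rest with
    | nil =>
      have hv : qdst q = v := hlast q rfl
      subst hv
      exact ⟨.cons (hadj q List.mem_cons_self) .nil, rfl⟩
    | cons q' rest' =>
      have hq' : qsrc q' = qdst q := (hchain 0 (by simp)).symm
      obtain ⟨p', hp'⟩ := ih (qdst q) v
        (fun r hr => hadj r (List.mem_cons_of_mem _ hr))
        (fun i hi => by
          have := hchain (i + 1) (by simpa using hi)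
          simpa using this)
        (by simp)
        (fun r hr => by
          have : q' = r := by simpa using hr
          subst this
          exact hq')
        (fun r hr => hlast r (by rw [List.getLast?_cons_cons]; exact hr))
      exact ⟨.cons (hadj q List.mem_cons_self) p', by simp [hp']⟩

end AuxLemmas

/-- There is a valid walk with exactly `ℓ` quadruples (and hence cost `ℓ`) from `u` to
`v` on the temporal cost graph of `(G, λ)` iff there is a strict temporal walk from `u`
to `v` in `(G, λ)` using exactly `ℓ` edges. -/
theorem valid_walk_iff_strict_temporal_walk {V : Type*}
    (G : SimpleGraph V) (lam : Sym2 V → Finset ℕ) (τ : ℕ)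
    (hlab : ∀ e : Sym2 V, ∀ t ∈ lam e, 1 ≤ t ∧ t ≤ τ)
    (u v : V) (l : ℕ) :
    (∃ W : List (V × V × ℕ × ℕ), IsValidWalk (tgF G lam) W ∧ W.length = l ∧
        walkCost (tgF G lam) W = (l : ℕ∞) ∧
        (W = [] → u = v) ∧ (∀ q, W.head? = some q → qsrc q = u) ∧
        (∀ q, W.getLast? = some q → qdst q = v)) ↔
    (∃ (p : G.Walk u v) (hlen : p.length = l) (s : Fin l → ℕ), StrictMono s ∧
        ∀ i : Fin l, s i ∈ lam (p.edges[(i : ℕ)]'(by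
          rw [SimpleGraph.Walk.length_edges, hlen]; exact i.isLt))) := by
  constructor
  · rintro ⟨W, ⟨hchain, hq, htime⟩, hlen, hcost, hemp, hhead, hlast⟩
    have hone : ∀ q ∈ W, tgF G lam (qsrc q) (qdst q) (qdep q) (qarr q) = 1 := by
      have h01 : ∀ x ∈ W.map (fun q => tgF G lam (qsrc q) (qdst q) (qdep q) (qarr q)),
          x = 0 ∨ x = 1 := by
        intro x hx
        obtain ⟨r, hrW, rfl⟩ := List.mem_map.mp hx
        exact tgF_zero_or_one (hq r hrW).2
      have hall := tg_all_one_of_sum_eq_length _ h01 (by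
        rw [List.length_map, hlen]; exact hcost)
      intro r hrW
      exact hall _ (List.mem_map_of_mem hrW)
    have hprop : ∀ q ∈ W, G.Adj (qsrc q) (qdst q) ∧ qdep q ∈ lam s(qsrc q, qdst q) ∧
        qarr q = qdep q + 1 := fun q hqW => of_tgF_eq_one (hone q hqW)
    obtain ⟨p, hpe⟩ := tg_exists_walk_of_quads W u v (fun q hqW => (hprop q hqW).1)
      hchain hemp hhead hlast
    have hplen : p.length = l := by
      rw [← SimpleGraph.Walk.length_edges, hpe, List.length_map, hlen]
    refine ⟨p, hplen, fun i => qdep (W[(i : ℕ)]'(hlen ▸ i.isLt)), ?_, ?_⟩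
    · set d : ℕ → ℕ := fun k => qdep (W.getD k (u, u, 0, 0)) with hd
      have hdk : ∀ k (hk : k < W.length), d k = qdep (W[k]'hk) := fun k hk => by
        simp only [hd, List.getD_eq_getElem _ _ hk]
      have key : ∀ k, k + 1 < W.length → d k < d (k + 1) := by
        intro k hk
        rw [hdk k (Nat.lt_of_succ_lt hk), hdk (k + 1) hk]
        have h1 := htime k hk
        have h2 := (hprop _ (List.getElem_mem (Nat.lt_of_succ_lt hk))).2.2
        omega
      have mono : ∀ j, j < W.length → ∀ i, i < j → d i < d j := by
        intro j
        induction j with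
        | zero => omega
        | succ n ihn =>
          intro hj i hij
          rcases Nat.lt_succ_iff_lt_or_eq.mp hij with h | rfl
          · exact lt_trans (ihn (Nat.lt_of_succ_lt hj) i h) (key n hj)
          · exact key i hj
      intro i j hij
      have hjW : (j : ℕ) < W.length := hlen ▸ j.isLt
      have hiW : (i : ℕ) < W.length := hlen ▸ i.isLt
      have := mono j hjW i hij
      rw [hdk _ hiW, hdk _ hjW] at this
      exact this
    · intro i
      have hi : (i : ℕ) < W.length := hlen ▸ i.isLt
      have hmem := (hprop _ (List.getElem_mem hi)).2.1
      convert hmem using 2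
      rw [List.getElem_of_eq hpe, List.getElem_map]
  · rintro ⟨p, rfl, s, hmono, hlab2⟩
    set W : List (V × V × ℕ × ℕ) :=
      List.ofFn (fun i : Fin p.length => (p.getVert i, p.getVert (i + 1), s i, s i + 1)) with hW
    have hWlen : W.length = p.length := by simp [hW]
    have hget : ∀ k (hk : k < W.length), W[k]'hk =
        (p.getVert k, p.getVert (k + 1), s ⟨k, hWlen ▸ hk⟩, s ⟨k, hWlen ▸ hk⟩ + 1) := by
      intro k hk
      simp [hW, List.getElem_ofFn]
    have hone : ∀ k (hk : k < W.length),
        tgF G lam (qsrc (W[k]'hk)) (qdst (W[k]'hk)) (qdep (W[k]'hk)) (qarr (W[k]'hk)) = 1 := by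
      intro k hk
      have hk' : k < p.length := hWlen ▸ hk
      rw [hget k hk]
      simp only [qsrc, qdst, qdep, qarr]
      have hadj := p.adj_getVert_succ hk'
      have hmem := hlab2 ⟨k, hk'⟩
      rw [tg_walk_edges_getElem p k hk'] at hmem
      exact tgF_eq_one_of hadj hmem rfl
    have hvalid : IsValidWalk (tgF G lam) W := by
      refine ⟨?_, ?_, ?_⟩
      · intro i hi
        rw [hget i (Nat.lt_of_succ_lt hi), hget (i + 1) hi]
        rfl
      · intro q hq
        obtain ⟨k, hk, rfl⟩ := List.mem_iff_getElem.mp hq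
        constructor
        · rw [hget k hk]
          simp [qdep, qarr]
        · rw [hone k hk]
          exact lt_top_iff_ne_top.mpr (by simp)
      · intro i hi
        have hi' : i + 1 < p.length := hWlen ▸ hi
        rw [hget i (Nat.lt_of_succ_lt hi), hget (i + 1) hi]
        simp only [qarr, qdep]
        have hlt : (⟨i, Nat.lt_of_succ_lt hi'⟩ : Fin p.length) < ⟨i + 1, hi'⟩ :=
          Fin.mk_lt_mk.mpr (Nat.lt_succ_self i)
        exact Nat.succ_le_of_lt (hmono hlt)
    have hcost : walkCost (tgF G lam) W = (p.length : ℕ∞) := by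
      have hall : ∀ x ∈ W.map (fun q => tgF G lam (qsrc q) (qdst q) (qdep q) (qarr q)),
          x = 1 := by
        intro x hx
        obtain ⟨r, hrW, rfl⟩ := List.mem_map.mp hx
        obtain ⟨k, hk, rfl⟩ := List.mem_iff_getElem.mp hrW
        exact hone k hk
      have h2 := tg_sum_eq_length _ hall
      rw [walkCost, h2, List.length_map, hWlen]
    refine ⟨W, hvalid, hWlen, hcost, ?_, ?_, ?_⟩
    · intro h
      have hz : p.length = 0 := by
        have := congrArg List.length h
        rw [hWlen] at this
        simpa using this
      exact SimpleGraph.Walk.eq_of_length_eq_zero hz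
    · intro q hq
      rw [List.head?_eq_getElem?] at hq
      obtain ⟨h0, rfl⟩ := List.getElem?_eq_some_iff.mp hq
      rw [hget 0 h0]
      simp [qsrc, SimpleGraph.Walk.getVert_zero]
    · intro q hq
      rw [List.getLast?_eq_getElem?] at hq
      obtain ⟨h0, rfl⟩ := List.getElem?_eq_some_iff.mp hq
      rw [hget _ h0]
      simp only [qdst]
      have hpos : 0 < W.length := by omega
      have hidx : W.length - 1 + 1 = p.length := by omega
      rw [hidx, SimpleGraph.Walk.getVert_length]
end
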